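/- Let G be the cumulative distribution function of a real continuous random variable whose density g is symmetric about 0 (g(-x) = g(x)), let f₀ be a probability density function on ℝ^d, and let w : ℝ^d → ℝ be measurable such that if Y has density f₀ then w(Y) has a density symmetric about 0. Then z ↦ 2 f₀(z) G(w(z)) is a probability density function on ℝ^d, i.e. ∫_{ℝ^d} 2 f₀(z) G(w(z)) dz = 1. -/

import Mathlib

open MeasureTheory Set
open scoped NNReal ENNReal

/-- Proposition 1 (Azzalini–Capitanio lemma): if `G` is the CDF of a continuous
distribution with density `g` symmetric about 0, `f₀` is a probability density on
`ℝ^d`, and the law of `w(Y)` (for `Y` with density `f₀`) is symmetric about 0, then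
`z ↦ 2 f₀(z) G(w(z))` integrates to 1. -/
theorem azzalini_capitanio_lemma
    (d : ℕ) (g : ℝ → ℝ) (G : ℝ → ℝ) (f₀ : (Fin d → ℝ) → ℝ) (w : (Fin d → ℝ) → ℝ)
    (hg_meas : Measurable g) (hg_nonneg : ∀ x, 0 ≤ g x)
    (hg_int : ∫ x, g x = 1) (hg_symm : ∀ x, g (-x) = g x)
    (hG : ∀ x, G x = ∫ t in Iic x, g t)
    (hf₀_meas : Measurable f₀) (hf₀_nonneg : ∀ z, 0 ≤ f₀ z)
    (hf₀_int : ∫ z, f₀ z = 1)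
    (hw : Measurable w)
    (hsymm :
      Measure.map (fun z => -w z)
        (volume.withDensity (fun z => ENNReal.ofReal (f₀ z))) =
      Measure.map w (volume.withDensity (fun z => ENNReal.ofReal (f₀ z)))) :
    ∫ z, 2 * f₀ z * G (w z) = 1 := by
  -- integrability of g and f₀
  have hg_intg : Integrable g := by
    by_contra h
    rw [integral_undef h] at hg_int
    norm_num at hg_int
  have hf₀_intg : Integrable f₀ := by
    by_contra h
    rw [integral_undef h] at hf₀_int
    norm_num at hf₀_int
  -- G is monotone, hence measurable; bounded between 0 and 1
  have hG_mono : Monotone G := by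
    intro x y hxy
    rw [hG x, hG y]
    exact setIntegral_mono_set hg_intg.integrableOn
      (Filter.Eventually.of_forall hg_nonneg) (HasSubset.Subset.eventuallyLE (Iic_subset_Iic.2 hxy))
  have hG_meas : Measurable G := hG_mono.measurable
  have hG_nonneg : ∀ x, 0 ≤ G x := by
    intro x
    rw [hG x]
    exact setIntegral_nonneg measurableSet_Iic fun t _ => hg_nonneg t
  have hG_sum : ∀ x, G x + G (-x) = 1 := by
    intro x
    have h1 : G (-x) = ∫ t in Ioi x, g t := by
      rw [hG (-x), ← integral_comp_neg_Ioi]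
      simp_rw [hg_symm]
    rw [hG x, h1]
    rw [intervalIntegral.integral_Iic_add_Ioi hg_intg.integrableOn hg_intg.integrableOn]
    exact hg_int
  have hG_le_one : ∀ x, G x ≤ 1 := by
    intro x
    have := hG_sum x
    nlinarith [hG_nonneg (-x)]
  -- the base probability measure
  set μ : Measure (Fin d → ℝ) :=
    volume.withDensity (fun z => ENNReal.ofReal (f₀ z)) with hμ
  have hμ_prob : IsProbabilityMeasure μ := by
    constructor
    rw [hμ, withDensity_apply _ MeasurableSet.univ, Measure.restrict_univ,
      ← ofReal_integral_eq_lintegral_ofReal hf₀_intg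
        (Filter.Eventually.of_forall hf₀_nonneg), hf₀_int, ENNReal.ofReal_one]
  -- rewrite the integral as an integral against μ
  have hdens : (fun z => ENNReal.ofReal (f₀ z)) =
      fun z => ((Real.toNNReal (f₀ z) : ℝ≥0) : ℝ≥0∞) := rfl
  have key : ∫ z, f₀ z * G (w z) = ∫ z, G (w z) ∂μ := by
    rw [hμ, hdens, integral_withDensity_eq_integral_smul hf₀_meas.real_toNNReal]
    congr 1
    ext z
    simp [NNReal.smul_def, Real.coe_toNNReal _ (hf₀_nonneg z)]
  -- integrability of G ∘ w and G ∘ (-w) against μ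
  have hbound : ∀ (v : (Fin d → ℝ) → ℝ), Measurable v →
      Integrable (fun z => G (v z)) μ := by
    intro v hv
    refine Integrable.mono' (integrable_const 1)
      (hG_meas.comp hv).aestronglyMeasurable ?_
    refine Filter.Eventually.of_forall fun z => ?_
    rw [Real.norm_eq_abs, abs_of_nonneg (hG_nonneg _)]
    exact hG_le_one _
  have hint_w : Integrable (fun z => G (w z)) μ := hbound w hw
  have hint_nw : Integrable (fun z => G (-w z)) μ := hbound _ hw.neg
  -- symmetry: ∫ G(-w) dμ = ∫ G(w) dμ
  have hsym_int : ∫ z, G (-w z) ∂μ = ∫ z, G (w z) ∂μ := by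
    rw [← integral_map (φ := fun z => -w z) hw.neg.aemeasurable hG_meas.aestronglyMeasurable,
      ← integral_map hw.aemeasurable hG_meas.aestronglyMeasurable, hμ, hsymm]
  -- sum to 1
  have hsum : (∫ z, G (w z) ∂μ) + ∫ z, G (-w z) ∂μ = 1 := by
    rw [← integral_add hint_w hint_nw]
    have : ∀ z, G (w z) + G (-w z) = 1 := fun z => hG_sum (w z)
    simp_rw [this]
    simp [measure_univ]
  have hhalf : ∫ z, G (w z) ∂μ = 1 / 2 := by
    rw [hsym_int] at hsum
    linarith
  calc ∫ z, 2 * f₀ z * G (w z) = 2 * ∫ z, f₀ z * G (w z) := by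
        simp_rw [mul_assoc]
        exact integral_const_mul 2 _
    _ = 2 * (1 / 2) := by rw [key, hhalf]
    _ = 1 := by norm_num
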